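/- arXiv:2410.00437 — 2 statements merged into one kernel-verified Lean document; each statement's English description precedes it below -/
import Mathlib

section
/- Let ⋆ be a semistar operation on R. Then: (1) ⋆_{a(h)} is a graded-e.a.b. semistar operation of finite type on R; (2) ⋆_f ≤ ⋆_{a(h)} ≤ ⋆_a, where for semistar operations σ, τ one writes σ ≤ τ if E^σ ⊆ E^τ for every nonzero R-submodule E of K; (3) (⋆_{a(h)})_a = ⋆_a. -/
open Pointwise

section
/- `Γ` is a nonzero torsionless (i.e. admitting a compatible total order) cancellative
commutative monoid, `A` is an integral domain graded by `Γ` via `𝒜`, with quotient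
field `K`. -/
variable {Γ : Type*} [AddCommMonoid Γ] [LinearOrder Γ]
  [CovariantClass Γ Γ (· + ·) (· < ·)] [Nontrivial Γ]
variable {A : Type*} [CommRing A] [IsDomain A]
variable {K : Type*} [Field K] [Algebra A K] [IsFractionRing A K]

instance : SMulCommClass K A K := SMulCommClass.symm A K K

variable (𝒜 : Γ → AddSubgroup A) [GradedRing 𝒜]

/-- `a` is a nonzero homogeneous element of the graded domain `A`. -/
def IsHomog (a : A) : Prop := a ≠ 0 ∧ ∃ γ : Γ, a ∈ 𝒜 γ

/-- `x ∈ K` is a (nonzero) homogeneous element of the homogeneous quotient ring `R_H`,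
i.e. `x = a/s` with `a` a nonzero homogeneous element and `s ∈ H`. -/
def IsHomogElem (x : K) : Prop :=
  ∃ a s : A, IsHomog 𝒜 a ∧ IsHomog 𝒜 s ∧ x * algebraMap A K s = algebraMap A K a

/-- `x ∈ K` belongs to the homogeneous quotient ring `R_H`. -/
def MemRH (x : K) : Prop :=
  ∃ a s : A, IsHomog 𝒜 s ∧ x * algebraMap A K s = algebraMap A K a

/-- The image in `K` of an integral ideal of `A`. -/
def idealToK (I : Ideal A) : Submodule A K := Submodule.map (Algebra.linearMap A K) I

/-- `E` is a homogeneous fractional ideal of `A`: `sE` is (the image in `K` of) a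
homogeneous integral ideal for some nonzero homogeneous `s`. -/
def IsHomogFrac (E : Submodule A K) : Prop :=
  ∃ s : A, IsHomog 𝒜 s ∧ ∃ I : Ideal A, Ideal.IsHomogeneous 𝒜 I ∧
    algebraMap A K s • E = idealToK (K := K) I

/-- The four axioms of a semistar operation, imposed on nonzero `A`-submodules of `K`. -/
def IsSemistar (star : Submodule A K → Submodule A K) : Prop :=
  (∀ x : K, x ≠ 0 → ∀ E : Submodule A K, E ≠ ⊥ → star (x • E) = x • star E) ∧
  (∀ E F : Submodule A K, E ≠ ⊥ → E ≤ F → star E ≤ star F) ∧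
  (∀ E : Submodule A K, E ≠ ⊥ → E ≤ star E) ∧
  (∀ E : Submodule A K, E ≠ ⊥ → star (star E) = star E)

/-- `star` is homogeneous preserving. -/
def HomogPres (star : Submodule A K → Submodule A K) : Prop :=
  ∀ E : Submodule A K, E ≠ ⊥ → IsHomogFrac 𝒜 E → IsHomogFrac 𝒜 (star E)

/-- Membership in `E^{⋆_f} = ⋃ {F^⋆ : F nonzero finitely generated, F ⊆ E}`. -/
def MemStarF (star : Submodule A K → Submodule A K) (E : Submodule A K) (x : K) : Prop :=
  ∃ F : Submodule A K, F ≠ ⊥ ∧ F.FG ∧ F ≤ E ∧ x ∈ star F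

/-- `star` is of finite type, i.e. `⋆ = ⋆_f`. -/
def IsFiniteType (star : Submodule A K → Submodule A K) : Prop :=
  ∀ E : Submodule A K, E ≠ ⊥ → ∀ x : K, x ∈ star E ↔ MemStarF star E x

/-- Membership in `E^{⋆_a}`:  `F^{⋆_a} = ⋃ {((FG)^⋆ : G^⋆) : G nonzero f.g.}` for f.g. `F`,
and `E^{⋆_a} = ⋃ {F^{⋆_a} : F ⊆ E nonzero f.g.}`. -/
def MemStarA (star : Submodule A K → Submodule A K) (E : Submodule A K) (x : K) : Prop :=
  ∃ F : Submodule A K, F ≠ ⊥ ∧ F.FG ∧ F ≤ E ∧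
    ∃ G : Submodule A K, G ≠ ⊥ ∧ G.FG ∧ ∀ y ∈ star G, x * y ∈ star (F * G)

/-- Membership in `E^{⋆_{a(h)}}`: as in `⋆_a` but with `G` ranging over nonzero finitely
generated *homogeneous* fractional ideals. -/
def MemStarAH (star : Submodule A K → Submodule A K) (E : Submodule A K) (x : K) : Prop :=
  ∃ F : Submodule A K, F ≠ ⊥ ∧ F.FG ∧ F ≤ E ∧
    ∃ G : Submodule A K, G ≠ ⊥ ∧ G.FG ∧ IsHomogFrac 𝒜 G ∧ ∀ y ∈ star G, x * y ∈ star (F * G)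

/-- `star` is graded-e.a.b. -/
def IsGrEab (star : Submodule A K → Submodule A K) : Prop :=
  ∀ E F G : Submodule A K,
    E ≠ ⊥ → E.FG → IsHomogFrac 𝒜 E →
    F ≠ ⊥ → F.FG → IsHomogFrac 𝒜 F →
    G ≠ ⊥ → G.FG → IsHomogFrac 𝒜 G →
    star (E * F) ≤ star (E * G) → star F ≤ star G

/-- The `A`-submodule of `K` generated by all products `e * v`, `e ∈ E`, `v ∈ S`
(e.g. `EV` for an overring `V`). -/
def mulSet (E : Submodule A K) (S : Set K) : Submodule A K :=
  Submodule.span A {z : K | ∃ e ∈ E, ∃ v ∈ S, z = e * v}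

/-- The `b`-operation: `E^b = ⋂ {EV : V a valuation overring of A}`. -/
def bOp : Submodule A K → Submodule A K := fun E =>
  ⨅ (V : ValuationSubring K) (_ : ∀ a : A, algebraMap A K a ∈ V), mulSet E (V : Set K)

/-- The image of a polynomial over `A` in the rational function field `K(X)`. -/
noncomputable def polyToRatFunc (f : Polynomial A) : RatFunc K :=
  algebraMap (Polynomial K) (RatFunc K) (Polynomial.map (algebraMap A K) f)

/-- The content ideal `c(f)` of a polynomial. -/
def contentIdeal (f : Polynomial A) : Ideal A := Ideal.span (Set.range f.coeff)

/-- The homogeneous content ideal `𝒜_f`, generated by all homogeneous components of all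
coefficients of `f`. -/
def homogContentIdeal (f : Polynomial A) : Ideal A :=
  Ideal.span {a : A | ∃ (n : ℕ) (γ : Γ), a = (DirectSum.decompose 𝒜 (f.coeff n) γ : A)}

/-- The Kronecker function ring `Kr(R,⋆)` as a subset of `K(X)`. -/
def KrSet (star : Submodule A K → Submodule A K) : Set (RatFunc K) :=
  {q | ∃ f g h : Polynomial A, g ≠ 0 ∧ h ≠ 0 ∧
    q * polyToRatFunc (K := K) g = polyToRatFunc (K := K) f ∧
    idealToK (contentIdeal f * contentIdeal h) ≤ star (idealToK (contentIdeal g * contentIdeal h))}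

/-- The homogeneous Kronecker function ring `KR(R,⋆)` as a subset of `K(X)`. -/
def KRSet (star : Submodule A K → Submodule A K) : Set (RatFunc K) :=
  {q | ∃ f g h : Polynomial A, g ≠ 0 ∧ h ≠ 0 ∧
    q * polyToRatFunc (K := K) g = polyToRatFunc (K := K) f ∧
    idealToK (homogContentIdeal 𝒜 f * homogContentIdeal 𝒜 h) ≤
      star (idealToK (homogContentIdeal 𝒜 g * homogContentIdeal 𝒜 h))}

/-- `V` is a homogeneous overring of `A`: `R ⊆ V ⊆ R_H` and `V` is generated as an
additive group by its homogeneous elements. -/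
def IsHomogOverring (V : Subring K) : Prop :=
  (∀ a : A, algebraMap A K a ∈ V) ∧ (∀ x ∈ V, MemRH 𝒜 x) ∧
  (∀ v ∈ V, v ∈ AddSubgroup.closure {x : K | x ∈ V ∧ IsHomogElem 𝒜 x})

/-- `V` is a gr-valuation overring of `A`. -/
def IsGrValOverring (V : Subring K) : Prop :=
  IsHomogOverring 𝒜 V ∧ ∀ x : K, IsHomogElem 𝒜 x → x ∈ V ∨ x⁻¹ ∈ V

/-- `V` is a gr-`⋆`-valuation overring of `A`: `F^⋆ ⊆ FV` for every nonzero finitely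
generated homogeneous fractional ideal `F`. -/
def IsGrStarValOverring (star : Submodule A K → Submodule A K) (V : Subring K) : Prop :=
  ∀ F : Submodule A K, F ≠ ⊥ → F.FG → IsHomogFrac 𝒜 F → star F ≤ mulSet F (V : Set K)

end


section AuxLemmas

variable {Γ : Type*} [AddCommMonoid Γ] [LinearOrder Γ]
  [CovariantClass Γ Γ (· + ·) (· < ·)] [Nontrivial Γ]
variable {A : Type*} [CommRing A] [IsDomain A]
variable {K : Type*} [Field K] [Algebra A K] [IsFractionRing A K]
variable (𝒜 : Γ → AddSubgroup A) [GradedRing 𝒜]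

lemma aux_mul_ne_bot {E F : Submodule A K} (hE : E ≠ ⊥) (hF : F ≠ ⊥) : E * F ≠ ⊥ := by
  obtain ⟨e, heE, he⟩ := (Submodule.ne_bot_iff E).mp hE
  obtain ⟨f, hfF, hf⟩ := (Submodule.ne_bot_iff F).mp hF
  exact (Submodule.ne_bot_iff _).mpr ⟨e * f, Submodule.mul_mem_mul heE hfF, mul_ne_zero he hf⟩

lemma aux_smul_ne_bot {x : K} (hx : x ≠ 0) {E : Submodule A K} (hE : E ≠ ⊥) : x • E ≠ ⊥ := by
  obtain ⟨e, heE, he⟩ := (Submodule.ne_bot_iff E).mp hE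
  exact (Submodule.ne_bot_iff _).mpr ⟨x • e, Submodule.smul_mem_pointwise_smul e x E heE,
    by simpa [smul_eq_mul] using mul_ne_zero hx he⟩

lemma aux_mem_smul {x m : K} {E : Submodule A K} : m ∈ x • E ↔ ∃ b ∈ E, x • b = m := by
  rw [← SetLike.mem_coe, Submodule.coe_pointwise_smul]; exact Set.mem_smul_set

lemma aux_smul_fg (x : K) {F : Submodule A K} (hF : F.FG) : (x • F).FG := by
  obtain ⟨s, hs, rfl⟩ := Submodule.fg_def.mp hF
  rw [Submodule.smul_span]
  exact Submodule.fg_span hs.smul_set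

lemma aux_one_ne_bot : (1 : Submodule A K) ≠ ⊥ :=
  (Submodule.ne_bot_iff _).mpr ⟨1, Submodule.one_le.mp le_rfl, one_ne_zero⟩

lemma aux_one_fg : (1 : Submodule A K).FG := by
  rw [Submodule.one_eq_span]; exact Submodule.fg_span_singleton 1

lemma aux_one_homog : IsHomogFrac 𝒜 (1 : Submodule A K) := by
  refine ⟨1, ⟨one_ne_zero, 0, SetLike.one_mem_graded 𝒜⟩, ⊤, Ideal.IsHomogeneous.top 𝒜, ?_⟩
  rw [map_one, one_smul, idealToK, Submodule.map_top, Submodule.one_eq_range]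

lemma aux_homog_mul {E F : Submodule A K} (hE : IsHomogFrac 𝒜 E) (hF : IsHomogFrac 𝒜 F) :
    IsHomogFrac 𝒜 (E * F) := by
  obtain ⟨s, ⟨hs0, γ, hsγ⟩, I, hI, hIE⟩ := hE
  obtain ⟨t, ⟨ht0, δ, htδ⟩, J, hJ, hJF⟩ := hF
  refine ⟨s * t, ⟨mul_ne_zero hs0 ht0, γ + δ, SetLike.mul_mem_graded hsγ htδ⟩, I * J,
    hI.mul hJ, ?_⟩
  have h1 : idealToK (K := K) (I * J) = idealToK (K := K) I * idealToK (K := K) J :=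
    Submodule.map_mul I J (Algebra.ofId A K)
  rw [h1, ← hIE, ← hJF, map_mul, smul_mul_assoc, mul_smul_comm, mul_smul]

lemma aux_key {star : Submodule A K → Submodule A K} (hstar : IsSemistar star)
    {f : K} {X Y : Submodule A K} (hX : X ≠ ⊥) (hY : Y ≠ ⊥)
    (h : ∀ u ∈ X, f * u ∈ star Y) : ∀ y ∈ star X, f * y ∈ star Y := by
  by_cases hf : f = 0
  · intro y _; rw [hf, zero_mul]; exact (star Y).zero_mem
  · have hXle : X ≤ f⁻¹ • star Y := by
      intro u hu
      exact aux_mem_smul.mpr ⟨f * u, h u hu, by rw [smul_eq_mul]; field_simp⟩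
    have hYib : f⁻¹ • Y ≠ ⊥ := aux_smul_ne_bot (inv_ne_zero hf) hY
    have heq : f⁻¹ • star Y = star (f⁻¹ • Y) := (hstar.1 f⁻¹ (inv_ne_zero hf) Y hY).symm
    have hle2 : star X ≤ f⁻¹ • star Y := by
      rw [heq]
      calc star X ≤ star (star (f⁻¹ • Y)) := hstar.2.1 X _ hX (heq ▸ hXle)
        _ = star (f⁻¹ • Y) := hstar.2.2.2 _ hYib
    intro y hy
    obtain ⟨w, hw, hweq⟩ := aux_mem_smul.mp (hle2 hy)
    rw [smul_eq_mul] at hweq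
    rw [← hweq, ← mul_assoc, mul_inv_cancel₀ hf, one_mul]
    exact hw

lemma aux_mul_mem {star : Submodule A K → Submodule A K} (hstar : IsSemistar star)
    {E F : Submodule A K} (hE : E ≠ ⊥) (hF : F ≠ ⊥) {x y : K}
    (hx : x ∈ star E) (hy : y ∈ star F) : x * y ∈ star (E * F) := by
  have hEF := aux_mul_ne_bot hE hF
  have step1 : ∀ e ∈ E, ∀ w ∈ star F, e * w ∈ star (E * F) := fun e he =>
    aux_key hstar hF hEF fun u hu => hstar.2.2.1 _ hEF (Submodule.mul_mem_mul he hu)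
  have step2 : ∀ v ∈ star E, y * v ∈ star (E * F) :=
    aux_key hstar hE hEF fun e he => by rw [mul_comm y e]; exact step1 e he y hy
  rw [mul_comm x y]; exact step2 x hx

lemma aux_extend {star : Submodule A K → Submodule A K} (hstar : IsSemistar star)
    {f : K} {F G H : Submodule A K} (hF : F ≠ ⊥) (hG : G ≠ ⊥) (hH : H ≠ ⊥)
    (h : ∀ y ∈ star G, f * y ∈ star (F * G)) :
    ∀ y ∈ star (G * H), f * y ∈ star (F * (G * H)) := by
  refine aux_key hstar (aux_mul_ne_bot hG hH) (aux_mul_ne_bot hF (aux_mul_ne_bot hG hH)) ?_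
  intro u hu
  refine Submodule.mul_induction_on hu (fun g hg n hn => ?_) (fun u v hu' hv' => ?_)
  · have h1 : f * g ∈ star (F * G) := h g (hstar.2.2.1 G hG hg)
    have h2 := aux_mul_mem hstar (aux_mul_ne_bot hF hG) hH h1 (hstar.2.2.1 H hH hn)
    rw [show F * (G * H) = F * G * H from (mul_assoc F G H).symm, ← mul_assoc]
    exact h2
  · rw [mul_add]; exact add_mem hu' hv'

lemma aux_mul_closure {c : K} {G W : Submodule A K} {M : Submodule A K}
    (h : ∀ v ∈ G, ∀ y ∈ W, c * (v * y) ∈ M) : ∀ u ∈ G * W, c * u ∈ M := by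
  intro u hu
  refine Submodule.mul_induction_on hu (fun v hv y hy => h v hv y hy) (fun u v hu' hv' => ?_)
  rw [mul_add]; exact add_mem hu' hv'

lemma aux_memzero (star : Submodule A K → Submodule A K) {T : Submodule A K} (hT : T ≠ ⊥) :
    MemStarAH 𝒜 star T 0 := by
  obtain ⟨e, heT, he⟩ := (Submodule.ne_bot_iff T).mp hT
  exact ⟨Submodule.span A {e}, fun hb => he (Submodule.span_singleton_eq_bot.mp hb),
    Submodule.fg_span_singleton e, Submodule.span_le.mpr (Set.singleton_subset_iff.mpr heT),
    1, aux_one_ne_bot, aux_one_fg, aux_one_homog 𝒜,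
    fun y _ => by rw [zero_mul]; exact Submodule.zero_mem _⟩

lemma aux_combine {star : Submodule A K → Submodule A K} (hstar : IsSemistar star)
    {T : Submodule A K} (hT : T ≠ ⊥) (c : K) (S : Finset K) :
    (∀ a ∈ S, MemStarAH 𝒜 star T (c * a)) →
    ∃ F0 W : Submodule A K, F0 ≠ ⊥ ∧ F0.FG ∧ F0 ≤ T ∧ W ≠ ⊥ ∧ W.FG ∧ IsHomogFrac 𝒜 W ∧
      ∀ v ∈ Submodule.span A (S : Set K), ∀ y ∈ star W, c * v * y ∈ star (F0 * W) := by
  classical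
  induction S using Finset.induction_on with
  | empty =>
    intro _
    obtain ⟨e, heT, he⟩ := (Submodule.ne_bot_iff T).mp hT
    refine ⟨Submodule.span A {e}, 1, fun hb => he (Submodule.span_singleton_eq_bot.mp hb),
      Submodule.fg_span_singleton e, Submodule.span_le.mpr (Set.singleton_subset_iff.mpr heT),
      aux_one_ne_bot, aux_one_fg, aux_one_homog 𝒜, ?_⟩
    intro v hv y _
    rw [Finset.coe_empty, Submodule.span_empty, Submodule.mem_bot] at hv
    rw [hv, mul_zero, zero_mul]; exact Submodule.zero_mem _
  | @insert a S haS ih =>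
    intro h
    obtain ⟨Fa, hFa0, hFafg, hFaT, Wa, hWa0, hWafg, hWah, hWa⟩ :=
      h a (Finset.mem_insert_self a S)
    obtain ⟨F0, W, hF00, hF0fg, hF0T, hW0, hWfg, hWh, hW⟩ :=
      ih fun b hb => h b (Finset.mem_insert_of_mem hb)
    refine ⟨Fa ⊔ F0, Wa * W, fun hb => hFa0 (le_bot_iff.mp (hb ▸ le_sup_left)),
      hFafg.sup hF0fg, sup_le hFaT hF0T, aux_mul_ne_bot hWa0 hW0, hWafg.mul hWfg,
      aux_homog_mul 𝒜 hWah hWh, ?_⟩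
    intro v hv y hy
    rw [Finset.coe_insert, Submodule.span_insert] at hv
    obtain ⟨v1, hv1, v2, hv2, rfl⟩ := Submodule.mem_sup.mp hv
    obtain ⟨r, rfl⟩ := Submodule.mem_span_singleton.mp hv1
    have hmono1 : star (Fa * (Wa * W)) ≤ star ((Fa ⊔ F0) * (Wa * W)) :=
      hstar.2.1 _ _ (aux_mul_ne_bot hFa0 (aux_mul_ne_bot hWa0 hW0))
        (mul_le_mul' le_sup_left le_rfl)
    have h1 : c * a * y ∈ star ((Fa ⊔ F0) * (Wa * W)) :=
      hmono1 (aux_extend hstar hFa0 hWa0 hW0 hWa y hy)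
    have h2' : ∀ y ∈ star (W * Wa), c * v2 * y ∈ star (F0 * (W * Wa)) :=
      aux_extend hstar hF00 hW0 hWa0 (hW v2 hv2)
    have h2 : c * v2 * y ∈ star ((Fa ⊔ F0) * (Wa * W)) := by
      have hmem := h2' y (by rw [mul_comm W Wa]; exact hy)
      have hmono2 : star (F0 * (W * Wa)) ≤ star ((Fa ⊔ F0) * (Wa * W)) :=
        hstar.2.1 _ _ (aux_mul_ne_bot hF00 (aux_mul_ne_bot hW0 hWa0))
          (by rw [mul_comm W Wa]; exact mul_le_mul' le_sup_right le_rfl)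
      exact hmono2 hmem
    have hadd : c * (r • a + v2) * y = r • (c * a * y) + c * v2 * y := by
      rw [Algebra.smul_def, Algebra.smul_def]; ring
    rw [hadd]
    exact Submodule.add_mem _ (Submodule.smul_mem _ r h1) h2

end AuxLemmas

/-- For a semistar operation `⋆` on the graded domain `R`:
(1) `⋆_{a(h)}` is a graded-e.a.b. semistar operation of finite type on `R`;
(2) `⋆_f ≤ ⋆_{a(h)} ≤ ⋆_a`;  (3) `(⋆_{a(h)})_a = ⋆_a`. -/
theorem starAH_properties
    {Γ : Type*} [AddCommMonoid Γ] [LinearOrder Γ]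
    [CovariantClass Γ Γ (· + ·) (· < ·)] [Nontrivial Γ]
    {A : Type*} [CommRing A] [IsDomain A]
    {K : Type*} [Field K] [Algebra A K] [IsFractionRing A K]
    (𝒜 : Γ → AddSubgroup A) [GradedRing 𝒜]
    (star starf stara starah starah_a : Submodule A K → Submodule A K)
    (hstar : IsSemistar star)
    (hf : ∀ E : Submodule A K, E ≠ ⊥ → ∀ x : K, x ∈ starf E ↔ MemStarF star E x)
    (ha : ∀ E : Submodule A K, E ≠ ⊥ → ∀ x : K, x ∈ stara E ↔ MemStarA star E x)
    (hah : ∀ E : Submodule A K, E ≠ ⊥ → ∀ x : K, x ∈ starah E ↔ MemStarAH 𝒜 star E x)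
    (haha : ∀ E : Submodule A K, E ≠ ⊥ → ∀ x : K, x ∈ starah_a E ↔ MemStarA starah E x) :
    (IsSemistar starah ∧ IsGrEab 𝒜 starah ∧ IsFiniteType starah) ∧
    (∀ E : Submodule A K, E ≠ ⊥ → starf E ≤ starah E ∧ starah E ≤ stara E) ∧
    (∀ E : Submodule A K, E ≠ ⊥ → starah_a E = stara E) := by
  -- basic consequences
  have hextS : ∀ E : Submodule A K, E ≠ ⊥ → E ≤ star E := hstar.2.2.1
  -- `star F ⊆ starah F` for `F` nonzero finitely generated
  have hAHself : ∀ F : Submodule A K, F ≠ ⊥ → F.FG → star F ≤ starah F := by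
    intro F h0 hfg z hz
    rw [hah F h0]
    exact ⟨F, h0, hfg, le_rfl, 1, aux_one_ne_bot, aux_one_fg, aux_one_homog 𝒜,
      fun y hy => aux_mul_mem hstar h0 aux_one_ne_bot hz hy⟩
  -- starah is extensive
  have hext : ∀ E : Submodule A K, E ≠ ⊥ → E ≤ starah E := by
    intro E hE x hx
    by_cases hx0 : x = 0
    · rw [hx0]; exact (starah E).zero_mem
    · rw [hah E hE]
      refine ⟨Submodule.span A {x}, fun hb => hx0 (Submodule.span_singleton_eq_bot.mp hb),
        Submodule.fg_span_singleton x, Submodule.span_le.mpr (Set.singleton_subset_iff.mpr hx),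
        1, aux_one_ne_bot, aux_one_fg, aux_one_homog 𝒜, fun y hy => ?_⟩
      exact aux_mul_mem hstar (fun hb => hx0 (Submodule.span_singleton_eq_bot.mp hb))
        aux_one_ne_bot
        (hextS _ (fun hb => hx0 (Submodule.span_singleton_eq_bot.mp hb))
          (Submodule.mem_span_singleton_self x)) hy
  -- starah is monotone
  have hmono : ∀ E F : Submodule A K, E ≠ ⊥ → E ≤ F → starah E ≤ starah F := by
    intro E F hE hle x hx
    have hF : F ≠ ⊥ := fun hb => hE (le_bot_iff.mp (hb ▸ hle))
    rw [hah E hE] at hx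
    rw [hah F hF]
    obtain ⟨F1, a, b, c, rest⟩ := hx
    exact ⟨F1, a, b, c.trans hle, rest⟩
  -- one direction of the smul-compatibility
  have hdir : ∀ x : K, x ≠ 0 → ∀ E : Submodule A K, E ≠ ⊥ →
      ∀ z ∈ starah E, x * z ∈ starah (x • E) := by
    intro x hx E hE z hz
    rw [hah E hE] at hz
    obtain ⟨F, hF0, hFfg, hFE, G, hG0, hGfg, hGh, hG⟩ := hz
    rw [hah _ (aux_smul_ne_bot hx hE)]
    refine ⟨x • F, aux_smul_ne_bot hx hF0, aux_smul_fg x hFfg, ?_, G, hG0, hGfg, hGh,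
      fun y hy => ?_⟩
    · intro w hw
      obtain ⟨b, hb, rfl⟩ := aux_mem_smul.mp hw
      exact Submodule.smul_mem_pointwise_smul b x E (hFE hb)
    · have h1 : z * y ∈ star (F * G) := hG y hy
      have h2 : x • (z * y) ∈ x • star (F * G) := Submodule.smul_mem_pointwise_smul _ x _ h1
      rw [← hstar.1 x hx _ (aux_mul_ne_bot hF0 hG0)] at h2
      rw [smul_mul_assoc]
      rw [smul_eq_mul, ← mul_assoc] at h2
      exact h2
  -- starah commutes with smul
  have hsmul : ∀ x : K, x ≠ 0 → ∀ E : Submodule A K, E ≠ ⊥ →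
      starah (x • E) = x • starah E := by
    intro x hx E hE
    apply le_antisymm
    · intro z hz
      have h2 := hdir x⁻¹ (inv_ne_zero hx) (x • E) (aux_smul_ne_bot hx hE) z hz
      rw [inv_smul_smul₀ hx E] at h2
      refine aux_mem_smul.mpr ⟨x⁻¹ * z, h2, ?_⟩
      rw [smul_eq_mul, ← mul_assoc, mul_inv_cancel₀ hx, one_mul]
    · intro w hw
      obtain ⟨z, hz, rfl⟩ := aux_mem_smul.mp hw
      rw [smul_eq_mul]
      exact hdir x hx E hE z hz
  -- starah is idempotent
  have hidem : ∀ E : Submodule A K, E ≠ ⊥ → starah (starah E) = starah E := by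
    intro E hE
    have hsE : starah E ≠ ⊥ := fun hb => hE (le_bot_iff.mp (hb ▸ hext E hE))
    apply le_antisymm
    · intro z hz
      rw [hah _ hsE] at hz
      obtain ⟨F, hF0, hFfg, hFle, G, hG0, hGfg, hGh, hG⟩ := hz
      obtain ⟨S, hSspan⟩ := hFfg
      have hFfg' : F.FG := ⟨S, hSspan⟩
      have hmem : ∀ a ∈ S, MemStarAH 𝒜 star E (1 * a) := by
        intro a haS
        rw [one_mul, ← hah E hE]
        exact hFle (hSspan ▸ Submodule.subset_span haS)
      obtain ⟨F0, W, hF00, hF0fg, hF0E, hW0, hWfg, hWh, hW⟩ :=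
        aux_combine 𝒜 hstar hE 1 S hmem
      rw [hah E hE]
      refine ⟨F0, hF00, hF0fg, hF0E, G * W, aux_mul_ne_bot hG0 hW0, hGfg.mul hWfg,
        aux_homog_mul 𝒜 hGh hWh, fun y hy => ?_⟩
      have step1 : z * y ∈ star (F * (G * W)) := aux_extend hstar hF0 hG0 hW0 hG y hy
      have hFW : ∀ f ∈ F, ∀ w ∈ W, f * w ∈ star (F0 * W) := by
        intro f hf w hw
        have := hW f (hSspan ▸ hf) w (hextS W hW0 hw)
        rwa [one_mul] at this
      have hsub : F * (G * W) ≤ star (F0 * (G * W)) := by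
        rw [mul_comm G W]
        refine Submodule.mul_le.mpr fun f hf u hu => ?_
        refine Submodule.mul_induction_on hu (fun w hw g hg => ?_)
          (fun u v hu' hv' => by rw [mul_add]; exact add_mem hu' hv')
        have h1 : f * w ∈ star (F0 * W) := hFW f hf w hw
        have h2 : g ∈ star G := hextS G hG0 hg
        have h3 := aux_mul_mem hstar (aux_mul_ne_bot hF00 hW0) hG0 h1 h2
        rw [show F0 * (W * G) = F0 * W * G from (mul_assoc F0 W G).symm, ← mul_assoc]
        exact h3
      have hmono2 : star (F * (G * W)) ≤ star (F0 * (G * W)) := by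
        have hm := hstar.2.1 _ _ (aux_mul_ne_bot hF0 (aux_mul_ne_bot hG0 hW0)) hsub
        rwa [hstar.2.2.2 _ (aux_mul_ne_bot hF00 (aux_mul_ne_bot hG0 hW0))] at hm
      exact hmono2 step1
    · exact hext _ hsE
  have hsemi : IsSemistar starah := ⟨hsmul, hmono, hext, hidem⟩
  -- graded e.a.b.
  have hgreab : IsGrEab 𝒜 starah := by
    intro E F G hE0 hEfg hEh hF0 _ _ hG0 hGfg hGh hle x hx
    obtain ⟨S, hS⟩ := hEfg
    have hEfg' : E.FG := ⟨S, hS⟩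
    have hEG0 : E * G ≠ ⊥ := aux_mul_ne_bot hE0 hG0
    have hmem : ∀ a ∈ S, MemStarAH 𝒜 star (E * G) (x * a) := by
      intro a haS
      have haE : a ∈ E := hS ▸ Submodule.subset_span haS
      by_cases ha0 : a = 0
      · rw [ha0, mul_zero]; exact aux_memzero 𝒜 star hEG0
      · have h1 : a * x ∈ starah (a • F) := hdir a ha0 F hF0 x hx
        have h2 : a • F ≤ E * F := by
          intro w hw
          obtain ⟨f, hf, rfl⟩ := aux_mem_smul.mp hw
          rw [smul_eq_mul]
          exact Submodule.mul_mem_mul haE hf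
        have h3 : a * x ∈ starah (E * G) :=
          hle (hmono _ _ (aux_smul_ne_bot ha0 hF0) h2 h1)
        rw [mul_comm a x] at h3
        exact (hah _ hEG0 _).mp h3
    obtain ⟨F0, W, hF00, hF0fg, hF0le, hW0, hWfg, hWh, hW⟩ :=
      aux_combine 𝒜 hstar hEG0 x S hmem
    have hW' : ∀ v ∈ E, ∀ y ∈ W, x * (v * y) ∈ star (E * G * W) := by
      intro v hv y hy
      have h1 := hW v (hS ▸ hv) y (hextS W hW0 hy)
      have hmono3 : star (F0 * W) ≤ star (E * G * W) :=
        hstar.2.1 _ _ (aux_mul_ne_bot hF00 hW0) (mul_le_mul' hF0le le_rfl)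
      rw [← mul_assoc]
      exact hmono3 h1
    have hstep : ∀ u ∈ E * W, x * u ∈ star (E * G * W) := aux_mul_closure hW'
    have hkey := aux_key hstar (aux_mul_ne_bot hE0 hW0) (aux_mul_ne_bot hEG0 hW0) hstep
    rw [hah G hG0]
    refine ⟨G, hG0, hGfg, le_rfl, E * W, aux_mul_ne_bot hE0 hW0, hEfg'.mul hWfg,
      aux_homog_mul 𝒜 hEh hWh, fun y hy => ?_⟩
    rw [show G * (E * W) = E * G * W from by ring]
    exact hkey y hy
  -- finite type
  have hfin : IsFiniteType starah := by
    intro E hE x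
    constructor
    · intro hx
      rw [hah E hE] at hx
      obtain ⟨F, hF0, hFfg, hFE, rest⟩ := hx
      exact ⟨F, hF0, hFfg, hFE, by rw [hah F hF0]; exact ⟨F, hF0, hFfg, le_rfl, rest⟩⟩
    · rintro ⟨F, hF0, hFfg, hFE, hx⟩
      rw [hah F hF0] at hx
      obtain ⟨F1, a, b, c, rest⟩ := hx
      rw [hah E hE]
      exact ⟨F1, a, b, c.trans hFE, rest⟩
  refine ⟨⟨hsemi, hgreab, hfin⟩, ?_, ?_⟩
  · -- ⋆_f ≤ ⋆_{a(h)} ≤ ⋆_a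
    intro E hE
    constructor
    · intro x hx
      rw [hf E hE] at hx
      obtain ⟨F, hF0, hFfg, hFE, hxF⟩ := hx
      rw [hah E hE]
      exact ⟨F, hF0, hFfg, hFE, 1, aux_one_ne_bot, aux_one_fg, aux_one_homog 𝒜,
        fun y hy => aux_mul_mem hstar hF0 aux_one_ne_bot hxF hy⟩
    · intro x hx
      rw [hah E hE] at hx
      rw [ha E hE]
      obtain ⟨F, a, b, c, G, d, e, _, g⟩ := hx
      exact ⟨F, a, b, c, G, d, e, g⟩
  · -- (⋆_{a(h)})_a = ⋆_a
    intro E hE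
    ext x
    rw [haha E hE x, ha E hE x]
    constructor
    · rintro ⟨F, hF0, hFfg, hFE, G, hG0, hGfg, hG⟩
      obtain ⟨S, hS⟩ := hGfg
      have hGfg' : G.FG := ⟨S, hS⟩
      have hFG0 : F * G ≠ ⊥ := aux_mul_ne_bot hF0 hG0
      have hmem : ∀ a ∈ S, MemStarAH 𝒜 star (F * G) (x * a) := by
        intro a haS
        have haG : a ∈ G := hS ▸ Submodule.subset_span haS
        exact (hah _ hFG0 _).mp (hG a (hext G hG0 haG))
      obtain ⟨F0, W, hF00, hF0fg, hF0le, hW0, hWfg, hWh, hW⟩ :=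
        aux_combine 𝒜 hstar hFG0 x S hmem
      have hW' : ∀ v ∈ G, ∀ y ∈ W, x * (v * y) ∈ star (F * G * W) := by
        intro v hv y hy
        have h1 := hW v (hS ▸ hv) y (hextS W hW0 hy)
        have hmono3 : star (F0 * W) ≤ star (F * G * W) :=
          hstar.2.1 _ _ (aux_mul_ne_bot hF00 hW0) (mul_le_mul' hF0le le_rfl)
        rw [← mul_assoc]
        exact hmono3 h1
      have hstep : ∀ u ∈ G * W, x * u ∈ star (F * G * W) := aux_mul_closure hW'
      have hkey := aux_key hstar (aux_mul_ne_bot hG0 hW0) (aux_mul_ne_bot hFG0 hW0) hstep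
      refine ⟨F, hF0, hFfg, hFE, G * W, aux_mul_ne_bot hG0 hW0, hGfg'.mul hWfg,
        fun y hy => ?_⟩
      rw [show F * (G * W) = F * G * W from (mul_assoc F G W).symm]
      exact hkey y hy
    · rintro ⟨F, hF0, hFfg, hFE, G, hG0, hGfg, hG⟩
      have hFG0 : F * G ≠ ⊥ := aux_mul_ne_bot hF0 hG0
      refine ⟨F, hF0, hFfg, hFE, G, hG0, hGfg, ?_⟩
      have h1 : ∀ u ∈ G, x * u ∈ starah (F * G) := fun u hu =>
        hAHself (F * G) hFG0 (hFfg.mul hGfg) (hG u (hextS G hG0 hu))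
      exact aux_key hsemi hG0 hFG0 h1
end

section
/- The set Spec_h(R) of homogeneous prime ideals of R, endowed with the subspace topology induced by the Zariski topology on Spec(R), is a spectral space. -/
open TopologicalSpace PrimeSpectrum

section Aux
variable {Γ : Type*} [AddCommMonoid Γ] [LinearOrder Γ] [IsOrderedCancelAddMonoid Γ]
variable {A : Type*} [CommRing A] (𝒜 : Γ → AddSubgroup A) [GradedRing 𝒜]

/-- The map sending a prime to its homogeneous core, as a point of `Spec_h`. -/
noncomputable def specHRetract (p : PrimeSpectrum A) :
    {q : PrimeSpectrum A // Ideal.IsHomogeneous 𝒜 q.asIdeal} :=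
  ⟨⟨(p.asIdeal.homogeneousCore 𝒜).toIdeal, p.isPrime.homogeneousCore⟩,
    (p.asIdeal.homogeneousCore 𝒜).isHomogeneous⟩

lemma mem_core_iff (I : Ideal A) (f : A) :
    f ∈ (I.homogeneousCore 𝒜).toIdeal ↔ ∀ i, (DirectSum.decompose 𝒜 f i : A) ∈ I := by
  constructor
  · intro hf i
    exact Ideal.toIdeal_homogeneousCore_le 𝒜 I ((I.homogeneousCore 𝒜).isHomogeneous i hf)
  · intro hf
    classical
    rw [← DirectSum.sum_support_decompose 𝒜 f]
    exact Ideal.sum_mem _ fun i _ =>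
      Ideal.mem_homogeneousCore_of_homogeneous_of_mem ⟨i, SetLike.coe_mem _⟩ (hf i)

lemma specHRetract_val (q : {q : PrimeSpectrum A // Ideal.IsHomogeneous 𝒜 q.asIdeal}) :
    specHRetract 𝒜 q.1 = q := by
  apply Subtype.ext
  apply PrimeSpectrum.ext
  exact q.2.toIdeal_homogeneousCore_eq_self

lemma continuous_specHRetract : Continuous (specHRetract 𝒜) := by
  apply Continuous.subtype_mk
  apply isTopologicalBasis_basic_opens.continuous_iff.mpr
  rintro _ ⟨f, rfl⟩
  have : (fun p : PrimeSpectrum A =>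
      (⟨(p.asIdeal.homogeneousCore 𝒜).toIdeal, p.isPrime.homogeneousCore⟩ : PrimeSpectrum A))
      ⁻¹' (basicOpen f : Set (PrimeSpectrum A))
      = ⋃ i, (basicOpen ((DirectSum.decompose 𝒜 f i : A)) : Set (PrimeSpectrum A)) := by
    ext p
    simp only [Set.mem_preimage, basicOpen_eq_zeroLocus_compl, Set.mem_compl_iff,
      mem_zeroLocus, Set.singleton_subset_iff, SetLike.mem_coe, Set.mem_iUnion]
    rw [mem_core_iff]
    push_neg
    rfl
  rw [this]
  exact isOpen_iUnion fun i => (basicOpen _).isOpen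

lemma image_basicOpen (f : A) :
    specHRetract 𝒜 '' (basicOpen f : Set (PrimeSpectrum A))
      = Subtype.val ⁻¹' (basicOpen f : Set (PrimeSpectrum A)) := by
  ext q
  simp only [Set.mem_image, Set.mem_preimage, basicOpen_eq_zeroLocus_compl, Set.mem_compl_iff,
    mem_zeroLocus, Set.singleton_subset_iff, SetLike.mem_coe]
  constructor
  · rintro ⟨p, hp, rfl⟩
    exact fun hf => hp (Ideal.toIdeal_homogeneousCore_le 𝒜 p.asIdeal hf)
  · intro hq
    exact ⟨q.1, hq, specHRetract_val 𝒜 q⟩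

lemma isCompact_Xf (f : A) :
    IsCompact (Subtype.val ⁻¹' (basicOpen f : Set (PrimeSpectrum A)) :
      Set {q : PrimeSpectrum A // Ideal.IsHomogeneous 𝒜 q.asIdeal}) := by
  rw [← image_basicOpen]
  exact (isCompact_basicOpen f).image (continuous_specHRetract 𝒜)

lemma basisX : IsTopologicalBasis
    {U : Set {q : PrimeSpectrum A // Ideal.IsHomogeneous 𝒜 q.asIdeal} |
      ∃ f : A, U = Subtype.val ⁻¹' (basicOpen f : Set (PrimeSpectrum A))} := by
  have h := (isTopologicalBasis_basic_opens (R := A)).isInducing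
    (f := (Subtype.val : {q : PrimeSpectrum A // Ideal.IsHomogeneous 𝒜 q.asIdeal} → _))
    Topology.IsEmbedding.subtypeVal.toIsInducing
  convert h using 1
  ext U
  simp only [Set.mem_image, Set.mem_range, Set.mem_setOf_eq]
  constructor
  · rintro ⟨f, rfl⟩; exact ⟨_, ⟨f, rfl⟩, rfl⟩
  · rintro ⟨_, ⟨f, rfl⟩, rfl⟩; exact ⟨f, rfl⟩

lemma quasiSoberX : QuasiSober {q : PrimeSpectrum A // Ideal.IsHomogeneous 𝒜 q.asIdeal} := by
  constructor
  intro S hS hSc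
  set T : Set (PrimeSpectrum A) := Subtype.val '' S with hT_def
  have hT : IsIrreducible T := hS.image _ continuous_subtype_val.continuousOn
  have hJp : (vanishingIdeal T).IsPrime := isIrreducible_iff_vanishingIdeal_isPrime.mp hT
  have hJh : (vanishingIdeal T).IsHomogeneous 𝒜 := by
    rw [vanishingIdeal]
    exact Ideal.IsHomogeneous.iInf₂ fun x hx => by
      obtain ⟨q, _, rfl⟩ := hx; exact q.2
  obtain ⟨F, hF, hSF⟩ := isClosed_induced_iff.mp hSc
  have hTF : closure T ⊆ F := hF.closure_subset_iff.mpr (by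
    rintro _ ⟨q, hq, rfl⟩
    rw [← hSF] at hq
    exact hq)
  have hclos : closure ({(⟨vanishingIdeal T, hJp⟩ : PrimeSpectrum A)} : Set (PrimeSpectrum A))
      = zeroLocus (vanishingIdeal T) := by
    rw [← zeroLocus_vanishingIdeal_eq_closure, vanishingIdeal_singleton]
  refine ⟨⟨⟨vanishingIdeal T, hJp⟩, hJh⟩, ?_⟩
  have hpT : (⟨vanishingIdeal T, hJp⟩ : PrimeSpectrum A) ∈ closure T := by
    rw [← zeroLocus_vanishingIdeal_eq_closure]
    exact fun f hf => hf
  apply le_antisymm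
  · -- closure {p} ⊆ S
    intro q hq
    rw [closure_subtype] at hq
    have h1 : (q : PrimeSpectrum A) ∈ closure ({(⟨vanishingIdeal T, hJp⟩ :
        PrimeSpectrum A)} : Set (PrimeSpectrum A)) := by
      simpa using hq
    rw [hclos, zeroLocus_vanishingIdeal_eq_closure] at h1
    rw [← hSF]
    exact hTF h1
  · -- S ⊆ closure {p}
    intro q hq
    rw [closure_subtype]
    have hmem : (q : PrimeSpectrum A) ∈ T := ⟨q, hq, rfl⟩
    have : (q : PrimeSpectrum A) ∈ zeroLocus (vanishingIdeal T) :=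
      subset_zeroLocus_vanishingIdeal T hmem
    rw [← hclos] at this
    simpa using this

set_option maxHeartbeats 1000000 in
lemma exists_finset_of_compact_open
    {U : Set {q : PrimeSpectrum A // Ideal.IsHomogeneous 𝒜 q.asIdeal}}
    (hU : IsOpen U) (hc : IsCompact U) :
    ∃ t : Finset A,
      U = ⋃ f ∈ t, Subtype.val ⁻¹' (basicOpen f : Set (PrimeSpectrum A)) := by
  have hcov : U ⊆ ⋃ f : {f : A // Subtype.val ⁻¹' (basicOpen f : Set (PrimeSpectrum A)) ⊆ U},
      Subtype.val ⁻¹' (basicOpen f.1 : Set (PrimeSpectrum A)) := by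
    intro x hx
    obtain ⟨V, ⟨f, rfl⟩, hxV, hVU⟩ := (basisX 𝒜).exists_subset_of_mem_open hx hU
    exact Set.mem_iUnion.mpr ⟨⟨f, hVU⟩, hxV⟩
  obtain ⟨t, ht⟩ := hc.elim_finite_subcover
    (fun f : {f : A // Subtype.val ⁻¹' (basicOpen f : Set (PrimeSpectrum A)) ⊆ U} =>
      Subtype.val ⁻¹' (basicOpen f.1 : Set (PrimeSpectrum A)))
    (fun f => (basicOpen f.1).isOpen.preimage continuous_subtype_val) hcov
  classical
  refine ⟨t.image Subtype.val, le_antisymm ?_ ?_⟩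
  · intro x hx
    obtain ⟨f, hf, hxf⟩ := Set.mem_iUnion₂.mp (ht hx)
    exact Set.mem_iUnion₂.mpr ⟨f.1, Finset.mem_image_of_mem _ hf, hxf⟩
  · refine Set.iUnion₂_subset fun a ha => ?_
    obtain ⟨f, _, rfl⟩ := Finset.mem_image.mp ha
    exact f.2

set_option maxHeartbeats 1000000 in
lemma isCompact_inter
    {U V : Set {q : PrimeSpectrum A // Ideal.IsHomogeneous 𝒜 q.asIdeal}}
    (hU : IsOpen U) (hcU : IsCompact U) (hV : IsOpen V) (hcV : IsCompact V) :
    IsCompact (U ∩ V) := by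
  obtain ⟨t, ht⟩ := exists_finset_of_compact_open 𝒜 hU hcU
  obtain ⟨t', ht'⟩ := exists_finset_of_compact_open 𝒜 hV hcV
  have key : U ∩ V = ⋃ f ∈ t, ⋃ g ∈ t',
      Subtype.val ⁻¹' (basicOpen (f * g) : Set (PrimeSpectrum A)) := by
    rw [ht, ht']
    ext x
    simp only [Set.mem_inter_iff, Set.mem_iUnion, Set.mem_preimage, basicOpen_mul,
      TopologicalSpace.Opens.coe_inf, Set.mem_inter_iff, SetLike.mem_coe]
    constructor
    · rintro ⟨⟨f, hf, hxf⟩, ⟨g, hg, hxg⟩⟩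
      exact ⟨f, hf, g, hg, hxf, hxg⟩
    · rintro ⟨f, hf, g, hg, hxf, hxg⟩
      exact ⟨⟨f, hf, hxf⟩, ⟨g, hg, hxg⟩⟩
  rw [key]
  exact t.finite_toSet.isCompact_biUnion fun f _ =>
    t'.finite_toSet.isCompact_biUnion fun g _ => isCompact_Xf 𝒜 _

end Aux


/-- A spectral space: quasi-compact, `T0`, the quasi-compact open subsets are closed under
finite intersection and form an open basis, and every nonempty irreducible closed subset
has a generic point (= quasi-sober). -/
def IsSpectralSpace (X : Type*) [TopologicalSpace X] : Prop :=
  CompactSpace X ∧ T0Space X ∧ QuasiSober X ∧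
  (∀ U V : Set X, IsOpen U → IsCompact U → IsOpen V → IsCompact V → IsCompact (U ∩ V)) ∧
  TopologicalSpace.IsTopologicalBasis {U : Set X | IsOpen U ∧ IsCompact U}

/-- Let `R` be an integral domain graded by a nonzero torsionless
(i.e. admitting a compatible total order) cancellative commutative monoid `Γ`.  The set
`Spec_h(R)` of homogeneous prime ideals of `R`, with the subspace topology induced by the
Zariski topology on `Spec(R)`, is a spectral space. -/
theorem specH_spectral
    {Γ : Type*} [AddCommMonoid Γ] [LinearOrder Γ]
    [CovariantClass Γ Γ (· + ·) (· < ·)] [Nontrivial Γ]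
    {A : Type*} [CommRing A] [IsDomain A]
    (𝒜 : Γ → AddSubgroup A) [GradedRing 𝒜] :
    IsSpectralSpace {p : PrimeSpectrum A // Ideal.IsHomogeneous 𝒜 p.asIdeal} := by
  letI : IsOrderedCancelAddMonoid Γ :=
    { add_le_add_left := fun a b hab c => by
        rcases hab.lt_or_eq with h | rfl
        · have := add_lt_add_left h c
          exact this.le
        · exact le_rfl
      le_of_add_le_add_left := fun a b c h => by
        by_contra hq
        push_neg at hq
        have := add_lt_add_left hq a
        simp only [add_comm] at this h
        exact absurd h (not_le.mpr this) }
  refine ⟨?_, inferInstance, quasiSoberX 𝒜, fun U V hU hcU hV hcV =>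
    isCompact_inter 𝒜 hU hcU hV hcV, ?_⟩
  · -- compact
    constructor
    have huniv : (Set.univ : Set {p : PrimeSpectrum A // Ideal.IsHomogeneous 𝒜 p.asIdeal})
        = specHRetract 𝒜 '' Set.univ := by
      ext q
      simp only [Set.mem_univ, true_iff, Set.image_univ, Set.mem_range]
      exact ⟨q.1, specHRetract_val 𝒜 q⟩
    rw [huniv]
    exact isCompact_univ.image (continuous_specHRetract 𝒜)
  · -- basis of compact opens
    apply TopologicalSpace.isTopologicalBasis_of_isOpen_of_nhds
    · exact fun U hU => hU.1
    · intro x U hx hU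
      obtain ⟨V, ⟨f, rfl⟩, hxV, hVU⟩ := (basisX 𝒜).exists_subset_of_mem_open hx hU
      exact ⟨_, ⟨(basicOpen f).isOpen.preimage continuous_subtype_val, isCompact_Xf 𝒜 f⟩,
        hxV, hVU⟩
end
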